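/- arXiv:1507.06569 — 3 statements merged into one kernel-verified Lean document; each statement's English description precedes it below -/
import Mathlib

section
/- Suppose λ ⊆ Box_{k,n}, μ is obtained from λ by adding a rim hook of size r with μ ⊄ Box_{k,n}, and ν is obtained from μ by removing a rim hook of size n, with ν ⊆ λ. Then the heights satisfy ht(λ/ν) + ht(μ/λ) = ht(μ/ν) + 1. -/
open MvPolynomial


theorem sorted_replicate_ge (m c : ℕ) : (List.replicate m c).Pairwise (· ≥ ·) := by
  induction m with
  | zero => simp
  | succ n ih =>
    rw [List.replicate_succ, List.pairwise_cons]
    exact ⟨fun b hb => (List.eq_of_mem_replicate hb).le, ih⟩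

/-- `h_m` with integer index: zero for negative `m`. -/
noncomputable def hpoly (N : ℕ) (m : ℤ) : MvPolynomial (Fin N) ℚ :=
  if 0 ≤ m then hsymm (Fin N) ℚ m.toNat else 0

/-- The Schur polynomial in `N` variables of a partition (Young diagram), via
the Jacobi–Trudi determinant `det (h_{λ_i + j - i})`. -/
noncomputable def schur (N : ℕ) (μ : YoungDiagram) : MvPolynomial (Fin N) ℚ :=
  Matrix.det (Matrix.of fun i j : Fin μ.rowLens.length =>
    hpoly N ((μ.rowLens.get i : ℤ) + (j : ℤ) - (i : ℤ)))

/-- The hook partition `(b, 1^(a-1))` (with `a` rows; intended for `a, b ≥ 1`). -/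
def hookDiagram (a b : ℕ) : YoungDiagram :=
  YoungDiagram.ofRowLens (max b 1 :: List.replicate (a - 1) 1) (by
    simp only [List.sortedGE_iff_pairwise, List.pairwise_cons]
    refine ⟨fun x hx => ?_, sorted_replicate_ge ..⟩
    rw [List.eq_of_mem_replicate hx]
    omega)

/-- The cells of the skew shape `μ / λ`. -/
def skewCells (lam mu : YoungDiagram) : Finset (ℕ × ℕ) := mu.cells \ lam.cells

/-- Two boxes are (edgewise) adjacent. -/
def Adj (c d : ℕ × ℕ) : Prop :=
  (c.1 = d.1 ∧ (c.2 = d.2 + 1 ∨ d.2 = c.2 + 1)) ∨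
  (c.2 = d.2 ∧ (c.1 = d.1 + 1 ∨ d.1 = c.1 + 1))

/-- A set of boxes is edgewise connected. -/
def IsConnectedCells (s : Finset (ℕ × ℕ)) : Prop :=
  ∀ c ∈ s, ∀ d ∈ s, Relation.ReflTransGen (fun x y => x ∈ s ∧ y ∈ s ∧ Adj x y) c d

/-- A set of boxes contains no 2×2 square. -/
def NoSquare (s : Finset (ℕ × ℕ)) : Prop :=
  ¬∃ i j : ℕ, (i, j) ∈ s ∧ (i + 1, j) ∈ s ∧ (i, j + 1) ∈ s ∧ (i + 1, j + 1) ∈ s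

/-- `μ / λ` is a rim hook (border strip): nonempty, connected, no 2×2 square. -/
def IsRimHook (lam mu : YoungDiagram) : Prop :=
  lam ≤ mu ∧ (skewCells lam mu).Nonempty ∧ IsConnectedCells (skewCells lam mu) ∧
    NoSquare (skewCells lam mu)

/-- The number of boxes of the skew shape `μ / λ`. -/
def skewSize (lam mu : YoungDiagram) : ℕ := (skewCells lam mu).card

/-- The height (number of nonempty rows) of the skew shape `μ / λ`. -/
def skewHt (lam mu : YoungDiagram) : ℕ := ((skewCells lam mu).image Prod.fst).card

/-- The `k × (n-k)` rectangle partition `Box_{k,n}`. -/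
def box (k n : ℕ) : YoungDiagram :=
  YoungDiagram.ofRowLens (List.replicate k (n - k)) (sorted_replicate_ge ..).sortedGE

/-- The diagonal `j - i` of a box `(i, j)`. -/
def diagOf (c : ℕ × ℕ) : ℤ := (c.2 : ℤ) - (c.1 : ℤ)


section HeightIdentityAux

lemma adj_fst' {c d : ℕ × ℕ} (h : Adj c d) : c.1 = d.1 ∨ c.1 = d.1 + 1 ∨ d.1 = c.1 + 1 := by
  rcases h with ⟨h, _⟩ | ⟨_, h⟩ <;> omega

lemma mem_skew {nu mu : YoungDiagram} {i j : ℕ} :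
    (i, j) ∈ skewCells nu mu ↔ nu.rowLen i ≤ j ∧ j < mu.rowLen i := by
  simp only [skewCells, Finset.mem_sdiff, YoungDiagram.mem_cells,
    YoungDiagram.mem_iff_lt_rowLen]
  omega

lemma row_mem_iff {nu mu : YoungDiagram} {i : ℕ} :
    i ∈ (skewCells nu mu).image Prod.fst ↔ nu.rowLen i < mu.rowLen i := by
  constructor
  · rintro h
    rw [Finset.mem_image] at h
    obtain ⟨⟨i', j⟩, hmem, rfl⟩ := h
    rw [mem_skew] at hmem
    show nu.rowLen i' < mu.rowLen i'
    omega
  · intro h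
    rw [Finset.mem_image]
    exact ⟨(i, nu.rowLen i), mem_skew.mpr ⟨le_refl _, h⟩, rfl⟩

lemma rows_ivp {s : Finset (ℕ × ℕ)} {c d : ℕ × ℕ}
    (h : Relation.ReflTransGen (fun x y => x ∈ s ∧ y ∈ s ∧ Adj x y) c d)
    (hc : c ∈ s) :
    ∀ m : ℕ, ((c.1 ≤ m ∧ m ≤ d.1) ∨ (d.1 ≤ m ∧ m ≤ c.1)) → ∃ e ∈ s, e.1 = m := by
  induction h with
  | refl => intro m hm; exact ⟨c, hc, by omega⟩
  | @tail b d _ hbd ih =>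
    intro m hm
    obtain ⟨hbs, hds, hadj⟩ := hbd
    by_cases hmd : m = d.1
    · exact ⟨d, hds, hmd.symm⟩
    · exact ih m (by rcases adj_fst' hadj with h | h | h <;> omega)

lemma row_interval {s : Finset (ℕ × ℕ)} (hconn : IsConnectedCells s) {i i' m : ℕ}
    (hi : i ∈ s.image Prod.fst) (hi' : i' ∈ s.image Prod.fst)
    (him : i ≤ m) (hmi : m ≤ i') : m ∈ s.image Prod.fst := by
  rw [Finset.mem_image] at hi hi' ⊢
  obtain ⟨c, hc, rfl⟩ := hi
  obtain ⟨d, hd, rfl⟩ := hi'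
  obtain ⟨e, he, hee⟩ := rows_ivp (hconn c hc d hd) hc m (by omega)
  exact ⟨e, he, hee⟩

lemma cross_step {s : Finset (ℕ × ℕ)} {c d : ℕ × ℕ}
    (h : Relation.ReflTransGen (fun x y => x ∈ s ∧ y ∈ s ∧ Adj x y) c d)
    (i : ℕ) : c.1 ≤ i → i < d.1 → ∃ j, (i, j) ∈ s ∧ (i + 1, j) ∈ s := by
  induction h with
  | refl => omega
  | @tail b d _ hbd ih =>
    intro hci hid
    obtain ⟨hbs, hds, hadj⟩ := hbd
    by_cases hb : i < b.1
    · exact ih hci hb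
    · have h1 : b.1 = i ∧ d.1 = i + 1 := by rcases adj_fst' hadj with h | h | h <;> omega
      have h2 : b.2 = d.2 := by
        rcases hadj with ⟨h, _⟩ | ⟨h, _⟩
        · omega
        · exact h
      refine ⟨b.2, ?_, ?_⟩
      · have : (i, b.2) = b := by rw [← h1.1]
        rwa [this]
      · have : (i + 1, b.2) = d := by rw [← h1.2, h2]
        rwa [this]

lemma chain_step {nu mu : YoungDiagram} (h : IsRimHook nu mu) {i : ℕ}
    (hi : nu.rowLen i < mu.rowLen i) (hi1 : nu.rowLen (i + 1) < mu.rowLen (i + 1)) :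
    mu.rowLen (i + 1) = nu.rowLen i + 1 := by
  obtain ⟨-, -, hconn, hsq⟩ := h
  have hc : (i, nu.rowLen i) ∈ skewCells nu mu := mem_skew.mpr ⟨le_refl _, hi⟩
  have hd : (i + 1, nu.rowLen (i + 1)) ∈ skewCells nu mu := mem_skew.mpr ⟨le_refl _, hi1⟩
  have hge : nu.rowLen i < mu.rowLen (i + 1) := by
    obtain ⟨j, hj1, hj2⟩ := cross_step (hconn _ hc _ hd) i (by simp) (by simp)
    rw [mem_skew] at hj1 hj2
    omega
  have hle : mu.rowLen (i + 1) ≤ nu.rowLen i + 1 := by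
    by_contra hcon
    push_neg at hcon
    have hmono : mu.rowLen (i + 1) ≤ mu.rowLen i := mu.rowLen_anti i (i + 1) (by omega)
    have hmono2 : nu.rowLen (i + 1) ≤ nu.rowLen i := nu.rowLen_anti i (i + 1) (by omega)
    exact hsq ⟨i, nu.rowLen i,
      mem_skew.mpr ⟨le_refl _, by omega⟩,
      mem_skew.mpr ⟨by omega, by omega⟩,
      mem_skew.mpr ⟨by omega, by omega⟩,
      mem_skew.mpr ⟨by omega, by omega⟩⟩
  omega

lemma rowLen_le_of_le {nu mu : YoungDiagram} (h : nu ≤ mu) (i : ℕ) :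
    nu.rowLen i ≤ mu.rowLen i := by
  by_contra hcon
  push_neg at hcon
  have : (i, mu.rowLen i) ∈ nu := YoungDiagram.mem_iff_lt_rowLen.mpr hcon
  have : (i, mu.rowLen i) ∈ mu := h this
  rw [YoungDiagram.mem_iff_lt_rowLen] at this
  omega

lemma sum_bound (nu mu : YoungDiagram) (a : ℕ) :
    ∀ t : ℕ, (∀ i, a ≤ i → i < a + t → mu.rowLen (i + 1) = nu.rowLen i + 1) →
    nu.rowLen a < mu.rowLen a →
    ∑ i ∈ Finset.Icc a (a + t), (mu.rowLen i - nu.rowLen i)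
      ≤ mu.rowLen a - nu.rowLen (a + t) + t := by
  intro t
  induction t with
  | zero => intro _ _; simp
  | succ t ih =>
    intro hchain hpos
    have hih := ih (fun i h1 h2 => hchain i h1 (by omega)) hpos
    have hstep : mu.rowLen (a + t + 1) = nu.rowLen (a + t) + 1 :=
      hchain (a + t) (by omega) (by omega)
    have hsum : ∑ i ∈ Finset.Icc a (a + (t + 1)), (mu.rowLen i - nu.rowLen i)
        = ∑ i ∈ Finset.Icc a (a + t), (mu.rowLen i - nu.rowLen i)
          + (mu.rowLen (a + t + 1) - nu.rowLen (a + t + 1)) := by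
      have : a + (t + 1) = (a + t) + 1 := by omega
      rw [this, Finset.sum_Icc_succ_top (by omega)]
    have h1 : nu.rowLen (a + t + 1) ≤ nu.rowLen (a + t) := nu.rowLen_anti _ _ (by omega)
    have h2 : nu.rowLen (a + t) ≤ nu.rowLen a := nu.rowLen_anti _ _ (by omega)
    have heq : a + (t + 1) = a + t + 1 := by omega
    rw [heq] at hsum ⊢
    omega

lemma card_bound (nu mu : YoungDiagram) (a b : ℕ)
    (hab : ∀ x ∈ skewCells nu mu, a ≤ x.1 ∧ x.1 ≤ b) :
    skewSize nu mu ≤ ∑ i ∈ Finset.Icc a b, (mu.rowLen i - nu.rowLen i) := by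
  rw [skewSize, Finset.card_eq_sum_card_fiberwise
    (f := Prod.fst) (t := Finset.Icc a b)
    (fun x hx => Finset.mem_Icc.mpr (hab x hx))]
  apply Finset.sum_le_sum
  intro i _
  have : (mu.rowLen i - nu.rowLen i) = (Finset.Ico (nu.rowLen i) (mu.rowLen i)).card := by
    rw [Nat.card_Ico]
  rw [this]
  apply Finset.card_le_card_of_injOn Prod.snd
  · rintro ⟨x1, x2⟩ hx
    simp only [Finset.mem_coe, Finset.mem_filter] at hx
    obtain ⟨hx1, hx2⟩ := hx
    subst hx2
    rw [mem_skew] at hx1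
    exact Finset.mem_Ico.mpr hx1
  · rintro ⟨x1, x2⟩ hx ⟨y1, y2⟩ hy hxy
    simp only [Finset.mem_coe, Finset.mem_filter] at hx hy
    simp only at hxy
    have : x1 = i := hx.2
    have : y1 = i := hy.2
    simp_all

lemma mem_box_snd {k n i j : ℕ} (h : (i, j) ∈ box k n) : j < n - k := by
  rw [box, YoungDiagram.mem_ofRowLens] at h
  obtain ⟨h1, h2⟩ := h
  simpa using h2

end HeightIdentityAux

/-- the height identity `ht(λ/ν) + ht(μ/λ) = ht(μ/ν) + 1`. -/
theorem height_identity (k n r : ℕ) (hk : 0 < k) (hkn : k < n) (hr : 0 < r) (hrn : r < n)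
    (nu lam mu : YoungDiagram) (hlam : lam ≤ box k n) (hcl : mu.colLen 0 ≤ k)
    (h1 : IsRimHook lam mu) (hs1 : skewSize lam mu = r) (hnot : ¬mu ≤ box k n)
    (h2 : IsRimHook nu mu) (hs2 : skewSize nu mu = n)
    (h3 : IsRimHook nu lam) (hs3 : skewSize nu lam = n - r) :
    skewHt nu lam + skewHt lam mu = skewHt nu mu + 1 := by
  have hnl : nu ≤ lam := h3.1
  have hlm : lam ≤ mu := h1.1
  have hNL : ∀ i, nu.rowLen i ≤ lam.rowLen i := rowLen_le_of_le hnl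
  have hLM : ∀ i, lam.rowLen i ≤ mu.rowLen i := rowLen_le_of_le hlm
  set R3 := (skewCells nu lam).image Prod.fst with hR3
  set R1 := (skewCells lam mu).image Prod.fst with hR1
  set R2 := (skewCells nu mu).image Prod.fst with hR2
  have hm3 : ∀ i, i ∈ R3 ↔ nu.rowLen i < lam.rowLen i := fun i => row_mem_iff
  have hm1 : ∀ i, i ∈ R1 ↔ lam.rowLen i < mu.rowLen i := fun i => row_mem_iff
  have hm2 : ∀ i, i ∈ R2 ↔ nu.rowLen i < mu.rowLen i := fun i => row_mem_iff
  have hunion : R2 = R3 ∪ R1 := by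
    ext i
    rw [Finset.mem_union, hm3, hm1, hm2]
    have := hNL i; have := hLM i
    omega
  have hcard : (R3 ∩ R1).card = 1 := by
    apply le_antisymm
    · -- at most one common row
      rw [Finset.card_le_one]
      intro i hi i' hi'
      by_contra hne
      -- wlog i < i'
      have key : ∀ p q : ℕ, p ∈ R3 ∩ R1 → q ∈ R3 ∩ R1 → p < q → False := by
        intro p q hp hq hpq
        rw [Finset.mem_inter] at hp hq
        have hp3 := (hm3 p).mp hp.1
        have hp1 := (hm1 p).mp hp.2
        have hq3 := (hm3 q).mp hq.1
        have hq1 := (hm1 q).mp hq.2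
        have hp13 : (p + 1) ∈ R3 := row_interval h3.2.2.1 hp.1 hq.1 (by omega) (by omega)
        have hp11 : (p + 1) ∈ R1 := row_interval h1.2.2.1 hp.2 hq.2 (by omega) (by omega)
        rw [hm3] at hp13
        rw [hm1] at hp11
        have hc3 : lam.rowLen (p + 1) = nu.rowLen p + 1 := chain_step h3 hp3 hp13
        have hc2 : mu.rowLen (p + 1) = nu.rowLen p + 1 :=
          chain_step h2 (by have := hLM p; omega) (by have := hNL (p+1); omega)
        omega
      rcases lt_trichotomy i i' with h | h | h
      · exact key i i' hi hi' h
      · exact hne h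
      · exact key i' i hi' hi h
    · -- at least one common row
      rw [Nat.one_le_iff_ne_zero, ← Nat.pos_iff_ne_zero, Finset.card_pos]
      by_contra hemp
      rw [Finset.not_nonempty_iff_eq_empty] at hemp
      have hdisj : ∀ i, i ∈ R3 → i ∉ R1 := by
        intro i hi3 hi1
        have : i ∈ R3 ∩ R1 := Finset.mem_inter.mpr ⟨hi3, hi1⟩
        rw [hemp] at this
        exact absurd this (Finset.notMem_empty i)
      have hs2ne : (skewCells nu mu).Nonempty := h2.2.1
      have hR2ne : R2.Nonempty := hs2ne.image _
      set a := R2.min' hR2ne with hadef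
      set b := R2.max' hR2ne with hbdef
      have ha : a ∈ R2 := R2.min'_mem hR2ne
      have hb : b ∈ R2 := R2.max'_mem hR2ne
      have hab : a ≤ b := R2.min'_le b hb
      have hint : ∀ m, a ≤ m → m ≤ b → m ∈ R2 := fun m h1' h2' =>
        row_interval h2.2.2.1 ha hb h1' h2'
      -- upward absorbing for R1
      have hup : ∀ m, m ∈ R1 → (m + 1) ∈ R2 → (m + 1) ∈ R1 := by
        intro m hm1' hm2'
        by_contra hno
        have hmem3 : (m + 1) ∈ R3 := by
          have := hunion ▸ hm2'
          rcases Finset.mem_union.mp this with h | h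
          · exact h
          · exact absurd h hno
        have e1 : lam.rowLen m < mu.rowLen m := (hm1 m).mp hm1'
        have e2 : nu.rowLen m = lam.rowLen m := by
          have : m ∉ R3 := fun hc => hdisj m hc hm1'
          rw [hm3] at this
          have := hNL m
          omega
        have e3 : nu.rowLen (m + 1) < lam.rowLen (m + 1) := (hm3 (m + 1)).mp hmem3
        have e4 : lam.rowLen (m + 1) = mu.rowLen (m + 1) := by
          rw [hm1] at hno
          have := hLM (m + 1)
          omega
        have hc2 : mu.rowLen (m + 1) = nu.rowLen m + 1 :=
          chain_step h2 (by omega) (by have := hLM (m+1); omega)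
        have := lam.rowLen_anti m (m + 1) (by omega)
        omega
      -- a ∈ R3
      have ha3 : a ∈ R3 := by
        by_contra hno
        have ha1 : a ∈ R1 := by
          have := hunion ▸ ha
          rcases Finset.mem_union.mp this with h | h
          · exact absurd h hno
          · exact h
        have hall : ∀ t, a + t ≤ b → (a + t) ∈ R1 := by
          intro t
          induction t with
          | zero => intro _; simpa using ha1
          | succ t ih =>
            intro hle
            have h1' : (a + t) ∈ R1 := ih (by omega)
            have h2' : (a + t + 1) ∈ R2 := hint (a + t + 1) (by omega) (by omega)
            have heq : a + (t + 1) = a + t + 1 := by omega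
            rw [heq]
            exact hup (a + t) h1' h2'
        have hs3ne : (skewCells nu lam).Nonempty := h3.2.1
        obtain ⟨c, hc⟩ := hs3ne
        have hc3 : c.1 ∈ R3 := Finset.mem_image_of_mem _ hc
        have hc2 : c.1 ∈ R2 := by
          rw [hm2]
          rw [hm3] at hc3
          have := hLM c.1
          omega
        have hcb : c.1 ≤ b := R2.le_max' _ hc2
        have hca : a ≤ c.1 := R2.min'_le _ hc2
        have : c.1 ∈ R1 := by
          have := hall (c.1 - a) (by omega)
          rwa [show a + (c.1 - a) = c.1 from by omega] at this
        exact hdisj c.1 hc3 this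
      -- lam.rowLen a = mu.rowLen a
      have hea : lam.rowLen a = mu.rowLen a := by
        have : a ∉ R1 := hdisj a ha3
        rw [hm1] at this
        have := hLM a
        omega
      -- b < k
      have hbk : b < k := by
        have hbpos : 0 < mu.rowLen b := by
          have := (hm2 b).mp hb
          omega
        have : (b, 0) ∈ mu := YoungDiagram.mem_iff_lt_rowLen.mpr hbpos
        rw [YoungDiagram.mem_iff_lt_colLen] at this
        omega
      -- lam.rowLen a ≤ n - k
      have hank : lam.rowLen a ≤ n - k := by
        by_contra hcon
        push_neg at hcon
        have : (a, n - k) ∈ lam := YoungDiagram.mem_iff_lt_rowLen.mpr hcon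
        have : (a, n - k) ∈ box k n := (YoungDiagram.cells_subset_iff.mpr hlam)
          (YoungDiagram.mem_cells _ |>.mpr this)
        have := mem_box_snd this
        omega
      -- chain on [a, b)
      have hchain : ∀ i, a ≤ i → i < a + (b - a) → mu.rowLen (i + 1) = nu.rowLen i + 1 := by
        intro i hi1 hi2
        have m1 : i ∈ R2 := hint i hi1 (by omega)
        have m2 : (i + 1) ∈ R2 := hint (i + 1) (by omega) (by omega)
        exact chain_step h2 ((hm2 i).mp m1) ((hm2 (i + 1)).mp m2)
      have hpos : nu.rowLen a < mu.rowLen a := (hm2 a).mp ha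
      have hsb := sum_bound nu mu a (b - a) hchain hpos
      have hcb := card_bound nu mu a b (by
        intro x hx
        have : x.1 ∈ R2 := Finset.mem_image_of_mem _ hx
        exact ⟨R2.min'_le _ this, R2.le_max' _ this⟩)
      rw [show a + (b - a) = b from by omega] at hsb
      rw [hs2] at hcb
      omega
  -- conclude
  have hht : skewHt nu mu = (R3 ∪ R1).card := by
    rw [skewHt, ← hunion]
  have := Finset.card_union_add_card_inter R3 R1
  rw [hcard] at this
  rw [skewHt, skewHt, hht, ← hR3, ← hR1]
  omega
end

section
/- In the quotient ring Λ_k/(h_{n−k+1},…,h_{n−1}) of symmetric polynomials in k variables, the relation h_n + (−1)^k s_{(n−k+1,1^{k−1})} = 0 holds. -/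
open MvPolynomial


section Aux

/-- The `m × m` Jacobi–Trudi-type matrix with first row `h_b, h_{b+1}, …` and the other
rows Toeplitz `h_{1+j-i}`. -/
noncomputable def JTmat (N m : ℕ) (b : ℤ) : Matrix (Fin m) (Fin m) (MvPolynomial (Fin N) ℚ) :=
  Matrix.of fun i j => hpoly N ((if (i : ℕ) = 0 then b else 1) + (j : ℤ) - (i : ℤ))

noncomputable def JTdet (N m : ℕ) (b : ℤ) : MvPolynomial (Fin N) ℚ := (JTmat N m b).det

lemma hpoly_isSymmetric (N : ℕ) (m : ℤ) : (hpoly N m).IsSymmetric := by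
  unfold hpoly; split
  · exact hsymm_isSymmetric _ _ _
  · exact MvPolynomial.IsSymmetric.zero

lemma hpoly_natCast (N b : ℕ) : hpoly N (b : ℤ) = hsymm (Fin N) ℚ b := by
  simp [hpoly]

lemma JTdet_isSymmetric (N m : ℕ) (b : ℤ) : (JTdet N m b).IsSymmetric := by
  intro e
  have h := RingHom.map_det (MvPolynomial.rename (R := ℚ) (⇑e)).toRingHom (JTmat N m b)
  have h2 : (JTmat N m b).map (MvPolynomial.rename (R := ℚ) (⇑e)).toRingHom = JTmat N m b := by
    funext i j
    exact hpoly_isSymmetric N _ e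
  rw [JTdet]
  calc MvPolynomial.rename (⇑e) (JTmat N m b).det
      = ((JTmat N m b).map (MvPolynomial.rename (R := ℚ) (⇑e)).toRingHom).det := h
    _ = (JTmat N m b).det := by rw [h2]

lemma JTdet_zero (N : ℕ) (b : ℤ) : JTdet N 0 b = 1 := Matrix.det_fin_zero

lemma JTdet_one (N : ℕ) (b : ℤ) : JTdet N 1 b = hpoly N b := by
  rw [JTdet, Matrix.det_fin_one]
  simp [JTmat]

lemma JTdet_succ_succ (N m : ℕ) (b : ℤ) :
    JTdet N (m + 2) b = hpoly N b * JTdet N (m + 1) 1 - JTdet N (m + 1) (b + 1) := by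
  rw [JTdet, show m + 2 = (m + 1).succ from rfl, Matrix.det_succ_column_zero,
    Fin.sum_univ_succ, Fin.sum_univ_succ]
  have hrest : ∀ i : Fin m,
      (-1) ^ ((i.succ.succ : Fin (m + 2)) : ℕ) * JTmat N (m + 2) b i.succ.succ 0 *
        ((JTmat N (m + 2) b).submatrix (Fin.succAbove i.succ.succ) Fin.succ).det = 0 := by
    intro i
    have hz : JTmat N (m + 2) b i.succ.succ 0 = 0 := by
      simp only [JTmat, Matrix.of_apply, Fin.val_succ, Fin.val_zero]
      rw [if_neg (by omega), hpoly, if_neg (by push_cast; omega)]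
    rw [hz, mul_zero, zero_mul]
  rw [Finset.sum_eq_zero (fun i _ => hrest i), add_zero]
  have h00 : JTmat N (m + 2) b 0 0 = hpoly N b := by
    simp only [JTmat, Matrix.of_apply, Fin.val_zero]
    norm_num
  have h10 : JTmat N (m + 2) b (Fin.succ 0) 0 = 1 := by
    simp only [JTmat, Matrix.of_apply, Fin.val_succ, Fin.val_zero]
    simp only [zero_add, one_ne_zero, if_false]
    norm_num [hpoly]
  have hsub0 : (JTmat N (m + 2) b).submatrix (Fin.succAbove 0) Fin.succ = JTmat N (m + 1) 1 := by
    funext i j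
    simp only [Matrix.submatrix_apply, Fin.succAbove_zero, JTmat, Matrix.of_apply, Fin.val_succ]
    rw [if_neg (by omega), ite_self]
    congr 1
    push_cast
    ring
  have hsub1 : (JTmat N (m + 2) b).submatrix (Fin.succAbove (Fin.succ 0)) Fin.succ
      = JTmat N (m + 1) (b + 1) := by
    funext i j
    rcases Fin.eq_zero_or_eq_succ i with hi | ⟨i', hi⟩
    · subst hi
      rw [Matrix.submatrix_apply,
        Fin.succAbove_of_castSucc_lt _ _ (by simp [Fin.lt_def])]
      simp only [JTmat, Matrix.of_apply, Fin.castSucc_zero, Fin.val_zero, Fin.val_succ,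
        if_pos rfl]
      congr 1
      push_cast
      ring
    · subst hi
      rw [Matrix.submatrix_apply,
        Fin.succAbove_of_le_castSucc _ _ (by simp [Fin.le_def])]
      simp only [JTmat, Matrix.of_apply, Fin.val_succ]
      rw [if_neg (by omega), if_neg (by omega)]
      congr 1
      push_cast
      ring
  rw [h00, h10, hsub0, hsub1]
  rw [JTdet, JTdet]
  simp [Fin.val_succ]
  ring

lemma JTdet_formula (N : ℕ) : ∀ m (b : ℕ),
    JTdet N (m + 1) (b : ℤ) = ∑ r ∈ Finset.range (m + 1),
      ((-1 : ℚ) ^ r) • (JTdet N (m - r) 1 * hsymm (Fin N) ℚ (b + r)) := by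
  intro m
  induction m with
  | zero =>
    intro b
    simp [JTdet_one, JTdet_zero, hpoly_natCast]
  | succ m ih =>
    intro b
    have hcast : ((b : ℤ) + 1) = ((b + 1 : ℕ) : ℤ) := by push_cast; ring
    rw [JTdet_succ_succ, hcast, ih (b + 1)]
    conv_rhs => rw [Finset.sum_range_succ']
    have hterm : ∀ r ∈ Finset.range (m + 1),
        ((-1 : ℚ) ^ (r + 1)) • (JTdet N (m + 1 - (r + 1)) 1 * hsymm (Fin N) ℚ (b + (r + 1)))
        = -(((-1 : ℚ) ^ r) • (JTdet N (m - r) 1 * hsymm (Fin N) ℚ (b + 1 + r))) := by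
      intro r _
      rw [Nat.succ_sub_succ, show b + (r + 1) = b + 1 + r from by ring, pow_succ, mul_smul,
        neg_one_smul, smul_neg]
    rw [Finset.sum_congr rfl hterm, Finset.sum_neg_distrib, hpoly_natCast]
    simp only [pow_zero, one_smul, Nat.sub_zero, Nat.add_zero]
    ring

set_option maxHeartbeats 1000000 in
lemma schur_hook_eq (k b : ℕ) (hk : 0 < k) (hb : 0 < b) :
    schur k (hookDiagram k b) = JTdet k k (b : ℤ) := by
  have hrow : (hookDiagram k b).rowLens = max b 1 :: List.replicate (k - 1) 1 := by
    apply YoungDiagram.rowLens_ofRowLens_eq_self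
    intro x hx
    rcases List.mem_cons.mp hx with h | h
    · omega
    · rw [List.eq_of_mem_replicate h]; omega
  have hlen : (hookDiagram k b).rowLens.length = k := by
    rw [hrow]; simp; omega
  rw [schur, JTdet, ← Matrix.det_reindex_self (finCongr hlen)]
  congr 1
  funext i j
  rw [Matrix.reindex_apply, Matrix.submatrix_apply]
  have hval : ∀ x : Fin k, (((finCongr hlen).symm x : Fin _) : ℕ) = (x : ℕ) := fun x => rfl
  have hget : ((hookDiagram k b).rowLens.get ((finCongr hlen).symm i) : ℤ)
      = (if (i : ℕ) = 0 then (b : ℤ) else 1) := by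
    have hg : (hookDiagram k b).rowLens.get ((finCongr hlen).symm i)
        = (hookDiagram k b).rowLens[(i : ℕ)]'(by rw [hlen]; exact i.isLt) := by
      simp [List.get_eq_getElem, hval]
    rw [hg]
    rcases Nat.eq_zero_or_pos (i : ℕ) with h0 | h0
    · simp [hrow, h0, Nat.max_eq_left hb]
    · obtain ⟨i', hi'⟩ : ∃ i', (i : ℕ) = i' + 1 := ⟨(i : ℕ) - 1, by omega⟩
      rw [if_neg (by omega)]
      simp only [hrow, hi', List.getElem_cons_succ]
      rw [List.getElem_replicate]
      norm_num
  show hpoly k _ = hpoly k _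
  rw [hget, hval i, hval j]

end Aux

/-- in `Λ_k/(h_{n-k+1},…,h_{n-1})` the relation
`h_n + (-1)^k s_{(n-k+1,1^{k-1})} = 0` holds, i.e. the left side lies in the ideal of
`Λ_k` generated by `h_{n-k+1},…,h_{n-1}` (membership witnessed with symmetric
coefficients). -/
theorem hn_plus_hookSchur_mem_ideal (k n : ℕ) (hk : 0 < k) (hkn : k < n) :
    ∃ c : ℕ → MvPolynomial (Fin k) ℚ, (∀ j, (c j).IsSymmetric) ∧
      hsymm (Fin k) ℚ n + ((-1 : ℚ) ^ k) • schur k (hookDiagram k (n - k + 1)) =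
        ∑ j ∈ Finset.Icc (n - k + 1) (n - 1), c j * hsymm (Fin k) ℚ j := by
  classical
  obtain ⟨m, hm⟩ : ∃ m, k = m + 1 := ⟨k - 1, by omega⟩
  set b : ℕ := n - k + 1 with hb
  have hb1 : 0 < b := by omega
  have hbr : b + (k - 1) = n := by omega
  have h1 := JTdet_formula k m b
  rw [← hm] at h1
  have hm' : m = k - 1 := by omega
  rw [hm'] at h1
  have hS : schur k (hookDiagram k b) = ∑ r ∈ Finset.range k,
      ((-1 : ℚ) ^ r) • (JTdet k (k - 1 - r) 1 * hsymm (Fin k) ℚ (b + r)) := by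
    rw [schur_hook_eq k b hk hb1, h1]
  refine ⟨fun j => ((-1 : ℚ) ^ (j + n + 1)) • JTdet k (n - j) 1, fun j => ?_, ?_⟩
  · exact MvPolynomial.IsSymmetric.smul _ (JTdet_isSymmetric k (n - j) 1)
  rw [hS]
  have hpeel := Finset.sum_range_succ
    (fun r => ((-1 : ℚ) ^ r) • (JTdet k (k - 1 - r) 1 * hsymm (Fin k) ℚ (b + r))) (k - 1)
  rw [show k - 1 + 1 = k from by omega] at hpeel
  simp only [show k - 1 - (k - 1) = 0 from by omega, JTdet_zero, one_mul, hbr] at hpeel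
  rw [hpeel, smul_add, smul_smul, ← pow_add,
    show k + (k - 1) = 2 * (k - 1) + 1 from by omega, pow_succ, pow_mul, neg_one_sq, one_pow,
    one_mul, neg_one_smul, Finset.smul_sum]
  simp only [smul_smul, ← pow_add]
  have hIcc : Finset.Icc b (n - 1) = Finset.Ico b n := by
    ext x
    simp only [Finset.mem_Icc, Finset.mem_Ico]
    omega
  rw [hIcc, Finset.sum_Ico_eq_sum_range, show n - b = k - 1 from by omega]
  have hsum : ∀ r ∈ Finset.range (k - 1),
      (((-1 : ℚ) ^ (b + r + n + 1)) • JTdet k (n - (b + r)) 1) * hsymm (Fin k) ℚ (b + r)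
      = ((-1 : ℚ) ^ (k + r)) • (JTdet k (k - 1 - r) 1 * hsymm (Fin k) ℚ (b + r)) := by
    intro r hr
    rw [Finset.mem_range] at hr
    rw [show n - (b + r) = k - 1 - r from by omega, smul_mul_assoc,
      show b + r + n + 1 = (k + r) + 2 * (n - k + 1) from by omega, pow_add, pow_mul,
      neg_one_sq, one_pow, mul_one]
  rw [Finset.sum_congr rfl hsum]
  abel
end

section
/- If λ ⊆ Box_{k,n} with λ having at most k parts, and μ ⊇ λ with μ/λ a rim hook of size r < n and μ_1 > n−k, then the Northeastern-most box of μ/λ is in the first row of μ, and any rim hook of size n removable from μ must have its Northeastern-most box at the end of the first row of μ. -/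
open MvPolynomial


lemma skew_mem {lam mu : YoungDiagram} {c : ℕ × ℕ} :
    c ∈ skewCells lam mu ↔ c ∈ mu ∧ c ∉ lam := by
  simp [skewCells, Finset.mem_sdiff, YoungDiagram.mem_cells]

lemma no_square_step {lam mu : YoungDiagram} (hsq : NoSquare (skewCells lam mu))
    {i1 j1 i2 j2 : ℕ} (h1 : (i1, j1) ∈ skewCells lam mu) (h2 : (i2, j2) ∈ skewCells lam mu)
    (hi : i1 < i2) (hd : (j2 : ℤ) - i2 = (j1 : ℤ) - i1) : False := by
  rw [skew_mem] at h1 h2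
  have hj : j1 + 1 ≤ j2 := by omega
  have hmu11 : (i1 + 1, j1 + 1) ∈ mu := mu.up_left_mem (by omega) hj h2.1
  have hmu01 : (i1, j1 + 1) ∈ mu := mu.up_left_mem (by omega) le_rfl hmu11
  have hmu10 : (i1 + 1, j1) ∈ mu := mu.up_left_mem le_rfl (by omega) hmu11
  exact hsq ⟨i1, j1, skew_mem.mpr ⟨h1.1, h1.2⟩,
    skew_mem.mpr ⟨hmu10, fun h => h1.2 (lam.up_left_mem (by omega) le_rfl h)⟩,
    skew_mem.mpr ⟨hmu01, fun h => h1.2 (lam.up_left_mem le_rfl (by omega) h)⟩,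
    skew_mem.mpr ⟨hmu11, fun h => h1.2 (lam.up_left_mem (by omega) (by omega) h)⟩⟩

/-- On a skew shape with no 2×2 square, the diagonal function is injective. -/
lemma diag_injOn {lam mu : YoungDiagram} (hsq : NoSquare (skewCells lam mu)) :
    Set.InjOn diagOf (skewCells lam mu) := by
  rintro ⟨i1, j1⟩ h1 ⟨i2, j2⟩ h2 hd
  simp only [diagOf] at hd
  rcases lt_trichotomy i1 i2 with h | h | h
  · exact absurd (no_square_step hsq h1 h2 h (by omega)) (by simp)
  · have : j1 = j2 := by omega
    simp [h, this]
  · exact absurd (no_square_step hsq h2 h1 h (by omega)) (by simp)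

/-- If the skew cells avoid squares, the second row of `μ` sticks out at most
one box past the first row of `λ`. -/
lemma rowLen_one_le {lam mu : YoungDiagram} (hle : lam ≤ mu)
    (hsq : NoSquare (skewCells lam mu)) : mu.rowLen 1 ≤ lam.rowLen 0 + 1 := by
  by_contra h
  push_neg at h
  set j0 := lam.rowLen 0 with hj0
  have h11 : (1, j0 + 1) ∈ mu := YoungDiagram.mem_iff_lt_rowLen.mpr (by omega)
  have h10 : (1, j0) ∈ mu := mu.up_left_mem le_rfl (by omega) h11
  have h01 : (0, j0 + 1) ∈ mu := mu.up_left_mem (by omega) le_rfl h11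
  have h00 : (0, j0) ∈ mu := mu.up_left_mem (by omega) (by omega) h11
  have hlam1 : lam.rowLen 1 ≤ j0 := lam.rowLen_anti 0 1 (by omega)
  have nl : ∀ i j : ℕ, j0 ≤ j → (i, j) ∉ lam := by
    intro i j hj hmem
    rw [YoungDiagram.mem_iff_lt_rowLen] at hmem
    have := lam.rowLen_anti 0 i (Nat.zero_le _)
    omega
  exact hsq ⟨0, j0, skew_mem.mpr ⟨h00, nl _ _ le_rfl⟩, skew_mem.mpr ⟨h10, nl _ _ le_rfl⟩,
    skew_mem.mpr ⟨h01, nl _ _ (by omega)⟩, skew_mem.mpr ⟨h11, nl _ _ (by omega)⟩⟩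

/-- if `μ ⊃ λ ⊆ Box_{k,n}` with `μ/λ` a rim hook of size `r < n` and
`μ₁ > n-k`, then the Northeastern-most box (the box of maximal diagonal) of `μ/λ` is
in the first row of `μ`, and any rim hook of size `n` removable from `μ` has its
Northeastern-most box at the end of the first row of `μ`. -/
theorem NE_box_in_first_row (k n r : ℕ) (hk : 0 < k) (hkn : k < n) (hr : 0 < r) (hrn : r < n)
    (lam mu : YoungDiagram) (hlam : lam ≤ box k n) (hcl : mu.colLen 0 ≤ k)
    (hhook : IsRimHook lam mu) (hsize : skewSize lam mu = r) (hfr : n - k < mu.rowLen 0) :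
    (∀ c ∈ skewCells lam mu, (∀ d ∈ skewCells lam mu, diagOf d ≤ diagOf c) → c.1 = 0) ∧
    (∀ nu : YoungDiagram, IsRimHook nu mu → skewSize nu mu = n →
      ∀ c ∈ skewCells nu mu, (∀ d ∈ skewCells nu mu, diagOf d ≤ diagOf c) →
        c = (0, mu.rowLen 0 - 1)) := by
  -- basic facts
  have hlam0 : lam.rowLen 0 ≤ n - k := by
    by_contra h
    push_neg at h
    have hmem : (0, n - k) ∈ lam := YoungDiagram.mem_iff_lt_rowLen.mpr h
    have : (0, n - k) ∈ box k n := hlam hmem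
    rw [box, YoungDiagram.mem_ofRowLens] at this
    obtain ⟨h1, h2⟩ := this
    simp at h2
  have hmu0pos : 0 < mu.rowLen 0 := by omega
  -- the NE corner of `mu` is in the skew cells of `mu / lam`
  have hne : (0, mu.rowLen 0 - 1) ∈ skewCells lam mu := by
    rw [skew_mem]
    constructor
    · exact YoungDiagram.mem_iff_lt_rowLen.mpr (by omega)
    · intro h
      rw [YoungDiagram.mem_iff_lt_rowLen] at h
      omega
  have hrow1 : mu.rowLen 1 ≤ n - k + 1 :=
    le_trans (rowLen_one_le hhook.1 hhook.2.2.2) (by omega)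
  constructor
  · rintro ⟨i, j⟩ hc hmax
    have hd := hmax _ hne
    have hj : j < mu.rowLen i := YoungDiagram.mem_iff_lt_rowLen.mp (skew_mem.mp hc).1
    have hj0 : mu.rowLen i ≤ mu.rowLen 0 := mu.rowLen_anti 0 i (Nat.zero_le _)
    simp only [diagOf] at hd
    omega
  · rintro nu hnu hsizen ⟨i, j⟩ hc hmax
    have hsq := hnu.2.2.2
    -- every cell of the skew shape has diagonal in [1-k, diagOf (i,j)]
    have hbound : ∀ d ∈ skewCells nu mu, diagOf d ∈ Finset.Icc (1 - (k : ℤ)) ((j : ℤ) - i) := by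
      rintro ⟨a, b⟩ hd
      have hcol : a < mu.colLen b := YoungDiagram.mem_iff_lt_colLen.mp (skew_mem.mp hd).1
      have hcol0 : mu.colLen b ≤ mu.colLen 0 := mu.colLen_anti 0 b (Nat.zero_le _)
      have := hmax _ hd
      simp only [diagOf] at this ⊢
      rw [Finset.mem_Icc]
      constructor
      · omega
      · exact this
    have hcard : n ≤ (Finset.Icc (1 - (k : ℤ)) ((j : ℤ) - i)).card := by
      rw [← hsizen, skewSize]
      exact Finset.card_le_card_of_injOn diagOf hbound (diag_injOn hsq)
    rw [Int.card_Icc] at hcard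
    have hD : (n : ℤ) - k ≤ (j : ℤ) - i := by
      rcases le_or_gt 0 ((j : ℤ) - i + 1 - (1 - (k : ℤ))) with h | h
      · have := Int.toNat_of_nonneg h
        omega
      · rw [Int.toNat_of_nonpos (by omega)] at hcard
        omega
    -- the maximal-diagonal cell must be in row 0
    have hi0 : i = 0 := by
      by_contra h
      have hi1 : 1 ≤ i := by omega
      have hj : j < mu.rowLen i := YoungDiagram.mem_iff_lt_rowLen.mp (skew_mem.mp hc).1
      have hj1 : mu.rowLen i ≤ mu.rowLen 1 := mu.rowLen_anti 1 i hi1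
      omega
    subst hi0
    -- it must be the last cell of row 0
    have hjmu : j < mu.rowLen 0 := YoungDiagram.mem_iff_lt_rowLen.mp (skew_mem.mp hc).1
    have hnu0 : nu.rowLen 0 ≤ j := by
      have := (skew_mem.mp hc).2
      by_contra h
      exact this (YoungDiagram.mem_iff_lt_rowLen.mpr (by omega))
    have hne' : (0, mu.rowLen 0 - 1) ∈ skewCells nu mu := by
      rw [skew_mem]
      refine ⟨YoungDiagram.mem_iff_lt_rowLen.mpr (by omega), fun h => ?_⟩
      rw [YoungDiagram.mem_iff_lt_rowLen] at h
      omega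
    have := hmax _ hne'
    simp only [diagOf] at this
    have : j = mu.rowLen 0 - 1 := by omega
    simp [this]
end
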